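/- arXiv:1902.02658 — 3 statements merged into one kernel-verified Lean document; each statement's English description precedes it below -/
import Mathlib

section
/- Let F_n = √(1+1/n)(N₁²−1) + √(1−1/n)(N₂²−1) with N₁, N₂ independent standard normals. Then E[F_n²] = 4 for every n, κ_4(F_n) − κ_4(G(2)) = 96/n², and κ_3(F_n) − κ_3(G(2)) = 8((1+1/n)^{3/2} + (1−1/n)^{3/2} − 2), which is asymptotically of order 1/n² (i.e. n²·(κ_3(F_n) − 16) converges to a nonzero constant as n → ∞). -/
open Filter

private noncomputable def gAux : ℝ → ℝ := fun x =>
  8 * (6 * (1 + Real.sqrt (1 - x ^ 2) ^ 3) - 2 * (3 - 3 * x ^ 2 + x ^ 4)) /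
    ((1 + Real.sqrt (1 - x ^ 2) ^ 3) *
      (Real.sqrt (1 + x) ^ 3 + Real.sqrt (1 - x) ^ 3 + 2))

private lemma keyAux (x a b c : ℝ) (ha0 : 0 ≤ a) (hb0 : 0 ≤ b)
    (ha : a ^ 2 = 1 + x) (hb : b ^ 2 = 1 - x) (hc : c = a * b) (hx : x ≠ 0) :
    (8 * (a ^ 3 + b ^ 3) - 16) / x ^ 2 =
      8 * (6 * (1 + c ^ 3) - 2 * (3 - 3 * x ^ 2 + x ^ 4)) /
        ((1 + c ^ 3) * (a ^ 3 + b ^ 3 + 2)) := by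
  have hc0 : 0 ≤ c := hc ▸ mul_nonneg ha0 hb0
  rw [div_eq_div_iff (by positivity) (by positivity)]
  subst hc
  have h6a : a ^ 6 = (1 + x) ^ 3 := by rw [← ha]; ring
  have h6b : b ^ 6 = (1 - x) ^ 3 := by rw [← hb]; ring
  have h6ab : (a * b) ^ 6 = ((1 + x) * (1 - x)) ^ 3 := by rw [← ha, ← hb]; ring
  linear_combination (8 * (1 + (a * b) ^ 3)) * h6a + (8 * (1 + (a * b) ^ 3)) * h6b +
    16 * h6ab

/-- For `F_n = √(1+1/n)(N₁²−1) + √(1−1/n)(N₂²−1)` (with `c₁ = √(1+1/n)`,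
`c₂ = √(1−1/n)`, so `κ₂ = 2(c₁²+c₂²)`, `κ₃ = 8(c₁³+c₂³)`, `κ₄ = 48(c₁⁴+c₂⁴)`):
`E[F_n²] = κ₂(F_n) = 4` for every `n ≥ 1`, `κ₄(F_n) − κ₄(G(2)) = 96/n²`, and
`n²·(κ₃(F_n) − 16)` converges to a nonzero constant as `n → ∞`. -/
theorem naive_example_cumulant_rates :
    (∀ n : ℕ, 1 ≤ n →
        2 * (Real.sqrt (1 + 1 / n) ^ 2 + Real.sqrt (1 - 1 / n) ^ 2) = 4) ∧
      (∀ n : ℕ, 1 ≤ n →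
        48 * (Real.sqrt (1 + 1 / n) ^ 4 + Real.sqrt (1 - 1 / n) ^ 4) - 96 =
          96 / (n : ℝ) ^ 2) ∧
      (∀ n : ℕ, 1 ≤ n →
        8 * (Real.sqrt (1 + 1 / n) ^ 3 + Real.sqrt (1 - 1 / n) ^ 3) - 16 =
          8 * ((1 + 1 / (n : ℝ)) ^ ((3 : ℝ) / 2) + (1 - 1 / (n : ℝ)) ^ ((3 : ℝ) / 2) - 2)) ∧
      ∃ L : ℝ, L ≠ 0 ∧
        Tendsto
          (fun n : ℕ =>
            (n : ℝ) ^ 2 *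
              (8 * (Real.sqrt (1 + 1 / n) ^ 3 + Real.sqrt (1 - 1 / n) ^ 3) - 16))
          atTop (nhds L) := by
  have basic : ∀ n : ℕ, 1 ≤ n →
      (0 : ℝ) < (n : ℝ) ∧ 1 / (n : ℝ) ≤ 1 ∧ (0 : ℝ) ≤ 1 + 1 / n ∧ (0 : ℝ) ≤ 1 - 1 / n := by
    intro n hn
    have hn0 : (0 : ℝ) < (n : ℝ) := by exact_mod_cast hn
    have h1 : 1 / (n : ℝ) ≤ 1 := by
      rw [div_le_one hn0]; exact_mod_cast hn
    refine ⟨hn0, h1, by positivity, by linarith⟩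
  refine ⟨?_, ?_, ?_, ?_⟩
  · intro n hn
    obtain ⟨hn0, h1, hp, hm⟩ := basic n hn
    rw [Real.sq_sqrt hp, Real.sq_sqrt hm]; ring
  · intro n hn
    obtain ⟨hn0, h1, hp, hm⟩ := basic n hn
    have e1 : Real.sqrt (1 + 1 / n) ^ 4 = (1 + 1 / (n : ℝ)) ^ 2 := by
      rw [show 4 = 2 * 2 from rfl, pow_mul, Real.sq_sqrt hp]
    have e2 : Real.sqrt (1 - 1 / n) ^ 4 = (1 - 1 / (n : ℝ)) ^ 2 := by
      rw [show 4 = 2 * 2 from rfl, pow_mul, Real.sq_sqrt hm]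
    rw [e1, e2]
    field_simp
    ring
  · intro n hn
    obtain ⟨hn0, h1, hp, hm⟩ := basic n hn
    have e : ∀ y : ℝ, 0 ≤ y → Real.sqrt y ^ 3 = y ^ ((3 : ℝ) / 2) := by
      intro y hy
      rw [show Real.sqrt y = y ^ ((1 : ℝ) / 2) from Real.sqrt_eq_rpow y,
        ← Real.rpow_natCast (y ^ ((1 : ℝ) / 2)) 3, ← Real.rpow_mul hy]
      norm_num
    rw [e _ hp, e _ hm]; ring
  · refine ⟨6, by norm_num, ?_⟩
    have hcont : ContinuousAt gAux 0 := by
      apply ContinuousAt.div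
      · fun_prop
      · fun_prop
      · norm_num
    have hg0 : gAux 0 = 6 := by
      simp [gAux]
      norm_num
    have htend : Tendsto (fun n : ℕ => gAux (1 / (n : ℝ))) atTop (nhds 6) := by
      rw [← hg0]
      exact (hcont.tendsto).comp tendsto_one_div_atTop_nhds_zero_nat
    refine htend.congr' ?_
    filter_upwards [eventually_ge_atTop 1] with n hn
    obtain ⟨hn0, h1, hp, hm⟩ := basic n hn
    set x : ℝ := 1 / (n : ℝ) with hx
    have hxne : x ≠ 0 := by positivity
    have hc : Real.sqrt (1 - x ^ 2) = Real.sqrt (1 + x) * Real.sqrt (1 - x) := by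
      rw [← Real.sqrt_mul hp]
      congr 1; ring
    have hkey := keyAux x (Real.sqrt (1 + x)) (Real.sqrt (1 - x)) (Real.sqrt (1 - x ^ 2))
      (Real.sqrt_nonneg _) (Real.sqrt_nonneg _) (Real.sq_sqrt hp) (Real.sq_sqrt hm) hc hxne
    have hn2 : (n : ℝ) ^ 2 = 1 / x ^ 2 := by
      rw [hx]; field_simp
    show gAux x = (n : ℝ) ^ 2 * (8 * (Real.sqrt (1 + x) ^ 3 + Real.sqrt (1 - x) ^ 3) - 16)
    rw [hn2, gAux, ← hkey]
    ring
end

section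
/- For r > 0, the function f⁺(0) := (h(0) − E[h(X_r)])/r extends the function f⁺_h(x) = (1/(x p_r(x)))·∫₀ˣ (h(t) − E[h(X_r)]) p_r(t) dt continuously at 0, i.e. lim_{x→0⁺} f⁺_h(x) = (h(0) − E[h(X_r)])/r, for every Lipschitz function h : ℝ → ℝ. -/
open MeasureTheory Real Set

/-- The Gamma(r,1) density `p_r(x) = x^{r−1} e^{−x} / Γ(r)` on `(0,∞)`. -/
noncomputable def gammaDens (r x : ℝ) : ℝ :=
  if 0 < x then x ^ (r - 1) * Real.exp (-x) / Real.Gamma r else 0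

lemma aux_tendsto (r : ℝ) (hr : 0 < r) (ψ : ℝ → ℝ) (hψ : Continuous ψ) :
    Filter.Tendsto (fun x => (∫ t in (0:ℝ)..x, ψ t * t ^ (r-1)) / x ^ r)
      (nhdsWithin 0 (Ioi 0)) (nhds (ψ 0 / r)) := by
  have hr1 : (-1:ℝ) < r - 1 := by linarith
  rw [Metric.tendsto_nhdsWithin_nhds]
  intro ε hε
  obtain ⟨δ, hδ, hδ'⟩ := Metric.continuous_iff.mp hψ 0 (r * ε / 2) (by positivity)
  refine ⟨δ, hδ, fun x hx hxd => ?_⟩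
  have hx0 : (0:ℝ) < x := hx
  set ε' : ℝ := r * ε / 2 with hε'
  -- integrability of the bound
  have hb : IntervalIntegrable (fun t : ℝ => ε' * t ^ (r-1)) volume 0 x :=
    (intervalIntegral.intervalIntegrable_rpow' hr1).const_mul ε'
  have hmeas : AEStronglyMeasurable (fun t : ℝ => (ψ t - ψ 0) * t ^ (r-1))
      (volume.restrict (Set.uIoc (0:ℝ) x)) :=
    (((hψ.sub continuous_const).measurable.mul
      (by measurability : Measurable fun t : ℝ => t ^ (r-1))).aestronglyMeasurable)
  have hΙ : Set.uIoc (0:ℝ) x = Ioc 0 x := uIoc_of_le hx0.le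
  have hbound : ∀ᵐ t ∂(volume.restrict (Set.uIoc (0:ℝ) x)),
      ‖(ψ t - ψ 0) * t ^ (r-1)‖ ≤ ε' * t ^ (r-1) := by
    rw [hΙ, ae_restrict_iff' measurableSet_Ioc]
    filter_upwards with t ht
    have ht0 : 0 < t := ht.1
    have htδ : dist t 0 < δ := by
      rw [Real.dist_eq, sub_zero, abs_of_pos ht0]
      rw [Real.dist_eq, sub_zero, abs_of_pos hx0] at hxd
      linarith [ht.2]
    have hψt := hδ' t htδ
    rw [Real.dist_eq] at hψt
    have hpow : (0:ℝ) ≤ t ^ (r-1) := Real.rpow_nonneg ht0.le _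
    calc ‖(ψ t - ψ 0) * t ^ (r-1)‖ = |ψ t - ψ 0| * t ^ (r-1) := by
          rw [norm_mul, Real.norm_eq_abs, Real.norm_eq_abs, abs_of_nonneg hpow]
      _ ≤ ε' * t ^ (r-1) := by
          apply mul_le_mul_of_nonneg_right hψt.le hpow
  have hf : IntervalIntegrable (fun t : ℝ => (ψ t - ψ 0) * t ^ (r-1)) volume 0 x := by
    refine hb.mono_fun hmeas ?_
    filter_upwards [hbound] with t ht
    refine ht.trans (le_abs_self _)
  -- value of the rpow integral
  have hrint : ∫ t in (0:ℝ)..x, t ^ (r-1) = x ^ r / r := by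
    rw [integral_rpow (Or.inl hr1)]
    rw [Real.zero_rpow (by linarith : r - 1 + 1 ≠ 0)]
    ring_nf
  have hψint : IntervalIntegrable (fun t : ℝ => ψ t * t ^ (r-1)) volume 0 x := by
    have := hf.add ((intervalIntegral.intervalIntegrable_rpow' hr1).const_mul (ψ 0))
    convert this using 1
    funext t; ring
  have hconstint : IntervalIntegrable (fun t : ℝ => ψ 0 * t ^ (r-1)) volume 0 x :=
    (intervalIntegral.intervalIntegrable_rpow' hr1).const_mul (ψ 0)
  have hsplit : ∫ t in (0:ℝ)..x, (ψ t - ψ 0) * t ^ (r-1)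
      = (∫ t in (0:ℝ)..x, ψ t * t ^ (r-1)) - ψ 0 * (x ^ r / r) := by
    have : ∀ t : ℝ, (ψ t - ψ 0) * t ^ (r-1) = ψ t * t ^ (r-1) - ψ 0 * t ^ (r-1) := by
      intro t; ring
    simp_rw [this]
    rw [intervalIntegral.integral_sub hψint hconstint,
      intervalIntegral.integral_const_mul, hrint]
  -- the bound on the integral
  have habs : |∫ t in (0:ℝ)..x, (ψ t - ψ 0) * t ^ (r-1)| ≤ ε' * (x ^ r / r) := by
    have key := intervalIntegral.norm_integral_le_abs_of_norm_le hbound hb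
    rw [intervalIntegral.integral_const_mul, hrint] at key
    have hnn : (0:ℝ) ≤ ε' * (x ^ r / r) := by
      have := Real.rpow_pos_of_pos hx0 r
      positivity
    rwa [Real.norm_eq_abs, abs_of_nonneg hnn] at key
  have hxr : (0:ℝ) < x ^ r := Real.rpow_pos_of_pos hx0 r
  rw [Real.dist_eq]
  have hquot : (∫ t in (0:ℝ)..x, ψ t * t ^ (r-1)) / x ^ r - ψ 0 / r
      = (∫ t in (0:ℝ)..x, (ψ t - ψ 0) * t ^ (r-1)) / x ^ r := by
    rw [hsplit]; field_simp
  rw [hquot, abs_div, abs_of_pos hxr]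
  calc |∫ t in (0:ℝ)..x, (ψ t - ψ 0) * t ^ (r-1)| / x ^ r
      ≤ (ε' * (x ^ r / r)) / x ^ r := by gcongr
    _ = ε' / r := by field_simp
    _ = ε / 2 := by rw [hε']; field_simp
    _ < ε := by linarith

/-- For `r > 0` and any Lipschitz function `h : ℝ → ℝ`, the solution
`f⁺_h(x) = (1/(x·p_r(x)))·∫₀ˣ (h(t) − E[h(X_r)]) p_r(t) dt` of the Gamma Stein
equation extends continuously at `0` with value `(h(0) − E[h(X_r)])/r`:
`lim_{x→0⁺} f⁺_h(x) = (h(0) − E[h(X_r)])/r`, where `E[h(X_r)] = ∫_{(0,∞)} h·p_r`. -/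
theorem stein_solution_continuous_extension_at_zero (r : ℝ) (hr : 0 < r)
    (h : ℝ → ℝ) (hh : ∃ L : NNReal, LipschitzWith L h) :
    Filter.Tendsto
      (fun x =>
        (∫ t in (0 : ℝ)..x, (h t - ∫ s in Ioi (0 : ℝ), h s * gammaDens r s) * gammaDens r t) /
          (x * gammaDens r x))
      (nhdsWithin 0 (Ioi 0))
      (nhds ((h 0 - ∫ s in Ioi (0 : ℝ), h s * gammaDens r s) / r)) := by
  obtain ⟨L, hL⟩ := hh
  set c : ℝ := ∫ s in Ioi (0 : ℝ), h s * gammaDens r s with hc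
  set ψ : ℝ → ℝ := fun t => (h t - c) * Real.exp (-t) with hψdef
  have hψ : Continuous ψ := (hL.continuous.sub continuous_const).mul
    (Real.continuous_exp.comp continuous_neg)
  have hΓ : 0 < Real.Gamma r := Real.Gamma_pos_of_pos hr
  have hexp : Filter.Tendsto (fun x : ℝ => Real.exp x) (nhdsWithin 0 (Ioi 0)) (nhds 1) := by
    have := (Real.continuous_exp.tendsto 0).mono_left
      (nhdsWithin_le_nhds : nhdsWithin (0:ℝ) (Ioi 0) ≤ nhds 0)
    simpa using this
  have key := (aux_tendsto r hr ψ hψ).mul hexp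
  have hψ0 : ψ 0 = h 0 - c := by simp [hψdef]
  rw [hψ0, mul_one] at key
  refine key.congr' ?_
  filter_upwards [self_mem_nhdsWithin] with x hx
  have hx0 : (0:ℝ) < x := hx
  have hxr : (0:ℝ) < x ^ r := Real.rpow_pos_of_pos hx0 r
  have hnum : ∫ t in (0:ℝ)..x, (h t - c) * gammaDens r t
      = (∫ t in (0:ℝ)..x, ψ t * t ^ (r-1)) / Real.Gamma r := by
    rw [intervalIntegral.integral_of_le hx0.le, intervalIntegral.integral_of_le hx0.le,
      ← integral_div]
    apply setIntegral_congr_fun measurableSet_Ioc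
    intro t ht
    have ht0 : 0 < t := ht.1
    simp only [gammaDens, if_pos ht0, hψdef]
    field_simp
  have hden : x * gammaDens r x = x ^ r * Real.exp (-x) / Real.Gamma r := by
    simp only [gammaDens, if_pos hx0]
    rw [show r = (r - 1) + 1 by ring, Real.rpow_add_one hx0.ne']
    field_simp
    ring
  rw [hnum, hden, Real.exp_neg]
  have h1 := hxr.ne'
  have h2 := hΓ.ne'
  have h3 := Real.exp_ne_zero x
  field_simp
end

section
/- Let μ and μ_ν be probability measures on ℝ with all moments finite, and suppose that for every k ≥ 0, |∫ x^k e^{itx}(μ−μ_ν)(dx)| ≤ ρ^{k+1}·d for all real t with |t| < ρ, where d ≥ 0 and ρ > 0. Then for every complex z = t + iy with |t| < ρ and |y| < e^{−1} for which both characteristic functions are defined by absolutely convergent integrals, |∫e^{izx}μ(dx) − ∫e^{izx}μ_ν(dx)| ≤ ρ·e^{ρ/e}·d. -/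
open MeasureTheory Complex

private lemma single_term_le_exp (a : ℝ) (ha : 0 ≤ a) (k : ℕ) :
    a ^ k / k.factorial ≤ Real.exp a := by
  calc a ^ k / k.factorial
      ≤ ∑ i ∈ Finset.range (k + 1), a ^ i / i.factorial := by
        refine Finset.single_le_sum (f := fun i => a ^ i / (i.factorial : ℝ)) ?_ ?_
        · intro i _
          positivity
        · simp
    _ ≤ Real.exp a := Real.sum_le_exp_of_nonneg ha _

private lemma aux_hasSum (ν : Measure ℝ) [IsProbabilityMeasure ν] (c : ℝ)
    (hint : Integrable (fun x => Real.exp (c * |x|)) ν)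
    (t y : ℝ) (hyc : |y| ≤ c) :
    HasSum (fun k : ℕ => ((-(y : ℂ)) ^ k / (k.factorial : ℂ)) *
        ∫ x, (x : ℂ) ^ k * Complex.exp (t * x * Complex.I) ∂ν)
      (∫ x, Complex.exp (((t : ℂ) + y * Complex.I) * x * Complex.I) ∂ν) := by
  set F : ℕ → ℝ → ℂ := fun k x =>
    (-(y : ℂ) * x) ^ k / (k.factorial : ℂ) * Complex.exp (t * x * Complex.I) with hF
  have hnormexp : ∀ x : ℝ, ‖Complex.exp ((t : ℂ) * x * Complex.I)‖ = 1 := by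
    intro x
    have : ((t : ℂ) * x) = ((t * x : ℝ) : ℂ) := by push_cast; ring
    rw [this, Complex.norm_exp_ofReal_mul_I]
  have hFnorm : ∀ k x, ‖F k x‖ = (|y| * |x|) ^ k / k.factorial := by
    intro k x
    simp [hF, norm_mul, norm_div, norm_pow, hnormexp, mul_one, norm_neg,
      Complex.norm_real, Real.norm_eq_abs, Complex.norm_natCast, mul_pow, abs_mul]
  have hFle : ∀ k x, ‖F k x‖ ≤ Real.exp (c * |x|) := by
    intro k x
    rw [hFnorm]
    refine le_trans (single_term_le_exp _ (by positivity) k) (Real.exp_le_exp.2 ?_)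
    exact mul_le_mul_of_nonneg_right hyc (abs_nonneg x)
  have hFmeas : ∀ k, AEStronglyMeasurable (F k) ν := by
    intro k
    apply Continuous.aestronglyMeasurable
    fun_prop
  have hFint : ∀ k, Integrable (F k) ν :=
    fun k => Integrable.mono' hint (hFmeas k) (Filter.Eventually.of_forall (hFle k))
  have hsum : Summable fun k => ∫ x, ‖F k x‖ ∂ν := by
    apply summable_of_sum_range_le (c := ∫ x, Real.exp (c * |x|) ∂ν)
    · intro k
      exact integral_nonneg fun x => norm_nonneg _
    · intro n
      rw [← integral_finset_sum _ (fun k _ => (hFint k).norm)]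
      refine integral_mono (integrable_finset_sum _ fun k _ => (hFint k).norm) hint ?_
      intro x
      simp only [hFnorm]
      calc ∑ k ∈ Finset.range n, (|y| * |x|) ^ k / (k.factorial : ℝ)
          ≤ Real.exp (|y| * |x|) := Real.sum_le_exp_of_nonneg (by positivity) n
        _ ≤ Real.exp (c * |x|) :=
            Real.exp_le_exp.2 (mul_le_mul_of_nonneg_right hyc (abs_nonneg x))
  have hpt : ∀ x : ℝ, HasSum (fun k => F k x)
      (Complex.exp (((t : ℂ) + y * Complex.I) * x * Complex.I)) := by
    intro x
    have h1 : HasSum (fun k : ℕ => (-(y : ℂ) * x) ^ k / (k.factorial : ℂ))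
        (NormedSpace.exp (-(y : ℂ) * x)) := NormedSpace.expSeries_div_hasSum_exp _
    rw [← Complex.exp_eq_exp_ℂ] at h1
    have h2 := h1.mul_right (Complex.exp ((t : ℂ) * x * Complex.I))
    have hval : Complex.exp (((t : ℂ) + y * Complex.I) * x * Complex.I) =
        Complex.exp (-(y : ℂ) * x) * Complex.exp ((t : ℂ) * x * Complex.I) := by
      rw [← Complex.exp_add]
      congr 1
      have hI : Complex.I ^ 2 = -1 := Complex.I_sq
      linear_combination ((y : ℂ) * x) * hI
    rw [hval]
    exact h2
  have key := hasSum_integral_of_summable_integral_norm hFint hsum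
  have hint_eq : (∫ x, (∑' k, F k x) ∂ν) =
      ∫ x, Complex.exp (((t : ℂ) + y * Complex.I) * x * Complex.I) ∂ν := by
    refine integral_congr_ae (Filter.Eventually.of_forall fun x => ?_)
    exact (hpt x).tsum_eq
  rw [hint_eq] at key
  convert key using 2 with k
  · exact rfl
  rw [hF]
  simp only []
  rw [← integral_const_mul]
  refine integral_congr_ae (Filter.Eventually.of_forall fun x => ?_)
  simp only [mul_pow]
  ring

/-- Let `μ, μ_ν` be probability measures on `ℝ` with `∫ e^{c|x|} < ∞` for some
`c > e⁻¹` (so all moments exist and the characteristic functions extend analytically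
to the strip `|Im z| < e⁻¹`). If for every `k ≥ 0` and every real `t` with `|t| < ρ`
one has `|∫ x^k e^{itx} (μ − μ_ν)(dx)| ≤ ρ^{k+1}·d`, then for every `z = t + iy` with
`|t| < ρ` and `|y| < e⁻¹`,
`|∫ e^{izx} μ(dx) − ∫ e^{izx} μ_ν(dx)| ≤ ρ·e^{ρ/e}·d`. -/
theorem characteristic_function_strip_bound
    (μ μν : Measure ℝ) [IsProbabilityMeasure μ] [IsProbabilityMeasure μν]
    (c : ℝ) (hc : Real.exp (-1) < c)
    (hμ : Integrable (fun x => Real.exp (c * |x|)) μ)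
    (hμν : Integrable (fun x => Real.exp (c * |x|)) μν)
    (ρ d : ℝ) (hρ : 0 < ρ) (hd : 0 ≤ d)
    (hmom : ∀ (k : ℕ) (t : ℝ), |t| < ρ →
      ‖(∫ x, (x : ℂ) ^ k * Complex.exp (t * x * Complex.I) ∂μ) -
          ∫ x, (x : ℂ) ^ k * Complex.exp (t * x * Complex.I) ∂μν‖ ≤ ρ ^ (k + 1) * d) :
    ∀ z : ℂ, |z.re| < ρ → |z.im| < Real.exp (-1) →
      ‖(∫ x, Complex.exp (z * x * Complex.I) ∂μ) -
          ∫ x, Complex.exp (z * x * Complex.I) ∂μν‖ ≤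
        ρ * Real.exp (ρ * Real.exp (-1)) * d := by
  intro z ht hy
  set t := z.re with htdef
  set y := z.im with hydef
  have hz : z = (t : ℂ) + y * Complex.I := (Complex.re_add_im z).symm
  have hyc : |y| ≤ c := le_of_lt (lt_trans hy hc)
  have h1 := aux_hasSum μ c hμ t y hyc
  have h2 := aux_hasSum μν c hμν t y hyc
  have hS := h1.sub h2
  set g : ℕ → ℂ := fun k => ((-(y : ℂ)) ^ k / (k.factorial : ℂ)) *
      ((∫ x, (x : ℂ) ^ k * Complex.exp (t * x * Complex.I) ∂μ) -
        ∫ x, (x : ℂ) ^ k * Complex.exp (t * x * Complex.I) ∂μν) with hg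
  have hS' : HasSum g
      ((∫ x, Complex.exp (z * x * Complex.I) ∂μ) -
        ∫ x, Complex.exp (z * x * Complex.I) ∂μν) := by
    rw [hz]
    convert hS using 2 with k
    · exact rfl
    rw [hg]
    ring
  set b : ℕ → ℝ := fun k => ρ * d * ((ρ * Real.exp (-1)) ^ k / k.factorial) with hb
  have hgb : ∀ k, ‖g k‖ ≤ b k := by
    intro k
    rw [hg, hb]
    simp only [norm_mul, norm_div, norm_pow, norm_neg, Complex.norm_real,
      Real.norm_eq_abs, Complex.norm_natCast]
    calc |y| ^ k / (k.factorial : ℝ) *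
          ‖(∫ x, (x : ℂ) ^ k * Complex.exp (t * x * Complex.I) ∂μ) -
            ∫ x, (x : ℂ) ^ k * Complex.exp (t * x * Complex.I) ∂μν‖
        ≤ Real.exp (-1) ^ k / (k.factorial : ℝ) * (ρ ^ (k + 1) * d) := by
          refine mul_le_mul ?_ (hmom k t ht) (norm_nonneg _) (by positivity)
          exact div_le_div_of_nonneg_right
            (pow_le_pow_left₀ (abs_nonneg y) hy.le k) (by positivity) |>.trans_eq rfl
      _ = ρ * d * ((ρ * Real.exp (-1)) ^ k / k.factorial) := by
          rw [mul_pow, pow_succ]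
          field_simp
  have hbsum : Summable b :=
    ((Real.summable_pow_div_factorial (ρ * Real.exp (-1))).mul_left (ρ * d))
  have hgsum : Summable fun k => ‖g k‖ :=
    Summable.of_nonneg_of_le (fun k => norm_nonneg _) hgb hbsum
  have htsumb : ∑' k, b k = ρ * Real.exp (ρ * Real.exp (-1)) * d := by
    rw [hb]
    rw [tsum_mul_left]
    have := (NormedSpace.expSeries_div_hasSum_exp (ρ * Real.exp (-1))).tsum_eq
    rw [this, ← Real.exp_eq_exp_ℝ]
    ring
  calc ‖(∫ x, Complex.exp (z * x * Complex.I) ∂μ) -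
          ∫ x, Complex.exp (z * x * Complex.I) ∂μν‖
      = ‖∑' k, g k‖ := by rw [hS'.tsum_eq]
    _ ≤ ∑' k, ‖g k‖ := norm_tsum_le_tsum_norm hgsum
    _ ≤ ∑' k, b k := Summable.tsum_le_tsum hgb hgsum hbsum
    _ = ρ * Real.exp (ρ * Real.exp (-1)) * d := htsumb
end
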